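/- Let Σ be a symmetric positive definite 3×3 matrix and μ ∈ ℝ³, and let the Gaussian density be G(x) = (1/(ρ·|Σ|^{1/2}))·exp(−(x−μ)ᵀΣ⁻¹(x−μ)/2). For any line x(t) = o + t·d with ‖d‖ = 1, the integral ∫_{ℝ} G(o + t·d) dt equals (√(2π)/(ρ·|Σ|^{1/2}))·(‖dᵤ‖)⁻¹·exp(−D²/2), where dᵤ = S⁻¹Rᵀd, oᵤ = S⁻¹Rᵀ(o−μ) for any decomposition Σ = RSSᵀRᵀ with R orthogonal and S = diag(s) positive, and D² = ‖oᵤ × dᵤ‖²/‖dᵤ‖². -/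

import Mathlib

open Matrix MeasureTheory Real

/-- For the anisotropic Gaussian
`G(x) = (1/(ρ·|Σ|^{1/2}))·exp(−(x−μ)ᵀΣ⁻¹(x−μ)/2)` and any line `x(t) = o + t·d` with
`‖d‖ = 1`, the integral `∫_ℝ G(o + t·d) dt` equals
`(√(2π)/(ρ·|Σ|^{1/2}))·‖dᵤ‖⁻¹·exp(−D²/2)`, where `dᵤ = S⁻¹Rᵀd`, `oᵤ = S⁻¹Rᵀ(o−μ)`
for a decomposition `Σ = RSSᵀRᵀ` (`R` orthogonal, `S = diag(s)` positive), and
`D² = ‖oᵤ × dᵤ‖²/‖dᵤ‖²`. -/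

lemma gauss_quad (a b c : ℝ) (ha : 0 < a) :
    ∫ t : ℝ, Real.exp (-(a * t ^ 2 + 2 * b * t + c) / 2) =
      Real.sqrt (2 * π) / Real.sqrt a * Real.exp (-(c - b ^ 2 / a) / 2) := by
  have ha' : a ≠ 0 := ha.ne'
  have hb : ((-(a/2) : ℂ)).re < 0 := by
    simp only [Complex.neg_re, Complex.div_ofNat_re, Complex.ofReal_re, neg_neg, neg_lt_zero]
    positivity
  have key := integral_cexp_quadratic hb (-b : ℂ) (-(c/2) : ℂ)
  have hL : ∀ t : ℝ, Complex.exp ((-(a/2) : ℂ) * t ^ 2 + (-b : ℂ) * t + (-(c/2) : ℂ))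
      = ((Real.exp (-(a * t ^ 2 + 2 * b * t + c) / 2) : ℝ) : ℂ) := by
    intro t
    rw [Complex.ofReal_exp]
    congr 1
    push_cast
    ring
  simp only [hL] at key
  rw [show (∫ x : ℝ, ((rexp (-(a * x ^ 2 + 2 * b * x + c) / 2) : ℝ) : ℂ))
      = ((∫ x : ℝ, rexp (-(a * x ^ 2 + 2 * b * x + c) / 2) : ℝ) : ℂ) from integral_ofReal] at key
  have hpow : ((↑π / -(-(↑a/2)) : ℂ)) ^ (1/2 : ℂ)
      = ((Real.sqrt (2 * π) / Real.sqrt a : ℝ) : ℂ) := by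
    have h1 : ((↑π / -(-(↑a/2)) : ℂ)) = ((2 * π / a : ℝ) : ℂ) := by
      push_cast; field_simp
    rw [h1, show (1/2 : ℂ) = ((1/2 : ℝ) : ℂ) from by norm_num,
      ← Complex.ofReal_cpow (by positivity), ← Real.sqrt_eq_rpow,
      Real.sqrt_div (by positivity)]
  have hexp : Complex.exp ((-(↑c/2) : ℂ) - (-↑b) ^ 2 / (4 * -(↑a/2)))
      = ((Real.exp (-(c - b ^ 2 / a) / 2) : ℝ) : ℂ) := by
    rw [Complex.ofReal_exp]
    congr 1
    have haC : (a : ℂ) ≠ 0 := by exact_mod_cast ha'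
    push_cast
    field_simp
    ring
  rw [hpow, hexp, ← Complex.ofReal_mul] at key
  exact_mod_cast key

theorem gaussian_line_integral_anisotropic
    (o d μ : Fin 3 → ℝ) (hd : Real.sqrt (d ⬝ᵥ d) = 1)
    (ρ : ℝ) (hρ : 0 < ρ)
    (R : Matrix (Fin 3) (Fin 3) ℝ) (hR : R ∈ Matrix.orthogonalGroup (Fin 3) ℝ)
    (s : Fin 3 → ℝ) (hs : ∀ i, 0 < s i) :
    let S : Matrix (Fin 3) (Fin 3) ℝ := Matrix.diagonal s
    let Cov : Matrix (Fin 3) (Fin 3) ℝ := R * S * Sᵀ * Rᵀ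
    let ou : Fin 3 → ℝ := (S⁻¹ * Rᵀ) *ᵥ (o - μ)
    let du : Fin 3 → ℝ := (S⁻¹ * Rᵀ) *ᵥ d
    let Dsq : ℝ := (crossProduct ou du) ⬝ᵥ (crossProduct ou du) / (du ⬝ᵥ du)
    (∫ t : ℝ, (1 / (ρ * Real.sqrt Cov.det)) *
        Real.exp (-((o + t • d - μ) ⬝ᵥ (Cov⁻¹ *ᵥ (o + t • d - μ))) / 2)) =
      (Real.sqrt (2 * π) / (ρ * Real.sqrt Cov.det)) * (Real.sqrt (du ⬝ᵥ du))⁻¹ *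
        Real.exp (-Dsq / 2) := by
  
  intro S Cov ou du Dsq
  -- basic facts
  have hSdet : S.det ≠ 0 := by
    rw [Matrix.det_diagonal]
    exact (Finset.prod_pos (fun i _ => hs i)).ne'
  have hSS : S * S⁻¹ = 1 := Matrix.mul_nonsing_inv _ hSdet.isUnit
  have hS'S : S⁻¹ * S = 1 := Matrix.nonsing_inv_mul _ hSdet.isUnit
  have hRRt : R * Rᵀ = 1 := by
    have := (Matrix.mem_orthogonalGroup_iff _ _).mp hR
    exact this
  have hRtR : Rᵀ * R = 1 := by
    have := (Matrix.mem_orthogonalGroup_iff' _ _).mp hR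
    exact this
  have hSt : Sᵀ = S := Matrix.diagonal_transpose s
  have hSinvT : (S⁻¹)ᵀ = S⁻¹ := by
    rw [Matrix.transpose_nonsing_inv, hSt]
  -- helper rewriting lemmas
  have e1 : ∀ X : Matrix (Fin 3) (Fin 3) ℝ, Rᵀ * (R * X) = X := fun X => by
    rw [← Matrix.mul_assoc, hRtR, Matrix.one_mul]
  have e2 : ∀ X : Matrix (Fin 3) (Fin 3) ℝ, S * (S⁻¹ * X) = X := fun X => by
    rw [← Matrix.mul_assoc, hSS, Matrix.one_mul]
  have e3 : ∀ X : Matrix (Fin 3) (Fin 3) ℝ, S⁻¹ * (S * X) = X := fun X => by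
    rw [← Matrix.mul_assoc, hS'S, Matrix.one_mul]
  have hCovInv : Cov⁻¹ = (S⁻¹ * Rᵀ)ᵀ * (S⁻¹ * Rᵀ) := by
    apply Matrix.inv_eq_right_inv
    show R * S * Sᵀ * Rᵀ * ((S⁻¹ * Rᵀ)ᵀ * (S⁻¹ * Rᵀ)) = 1
    rw [Matrix.transpose_mul, Matrix.transpose_transpose, hSinvT, hSt]
    simp only [Matrix.mul_assoc, e1, e2, e3]
    exact hRRt
  have hMinv : (R * S) * (S⁻¹ * Rᵀ) = 1 := by
    simp only [Matrix.mul_assoc, e2]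
    exact hRRt
  -- d is a unit vector
  have hdd : d ⬝ᵥ d = 1 := by
    have h0 : 0 ≤ d ⬝ᵥ d := Finset.sum_nonneg fun i _ => mul_self_nonneg _
    nlinarith [Real.sq_sqrt h0, hd]
  have hdu : 0 < du ⬝ᵥ du := by
    have h0 : 0 ≤ du ⬝ᵥ du := Finset.sum_nonneg fun i _ => mul_self_nonneg _
    rcases h0.lt_or_eq with h | h
    · exact h
    · exfalso
      have hz : du = 0 := (dotProduct_self_eq_zero).mp h.symm
      have : d = 0 := by
        have : (R * S) *ᵥ du = d := by
          show (R * S) *ᵥ ((S⁻¹ * Rᵀ) *ᵥ d) = d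
          rw [Matrix.mulVec_mulVec, ← Matrix.mul_assoc]
          rw [show R * S * S⁻¹ * Rᵀ = (R * S) * (S⁻¹ * Rᵀ) from by rw [Matrix.mul_assoc]]
          rw [hMinv, Matrix.one_mulVec]
        rw [hz, Matrix.mulVec_zero] at this
        exact this.symm
      rw [this] at hdd
      simp [dotProduct] at hdd
  set a : ℝ := du ⬝ᵥ du with ha_def
  set b : ℝ := ou ⬝ᵥ du with hb_def
  set c : ℝ := ou ⬝ᵥ ou with hc_def
  -- quadratic form along the line
  have hquad : ∀ t : ℝ, (o + t • d - μ) ⬝ᵥ (Cov⁻¹ *ᵥ (o + t • d - μ))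
      = a * t ^ 2 + 2 * b * t + c := by
    intro t
    have hxv : (S⁻¹ * Rᵀ) *ᵥ (o + t • d - μ) = ou + t • du := by
      have : o + t • d - μ = (o - μ) + t • d := by
        funext i; simp; ring
      rw [this, Matrix.mulVec_add, Matrix.mulVec_smul]
    rw [hCovInv, ← Matrix.mulVec_mulVec, Matrix.dotProduct_mulVec,
      Matrix.vecMul_transpose, hxv]
    simp only [add_dotProduct, dotProduct_add, smul_dotProduct,
      dotProduct_smul, smul_eq_mul, ← ha_def, ← hb_def, ← hc_def,
      dotProduct_comm du ou, ← hb_def]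
    ring
  -- compute the integral
  simp_rw [hquad]
  rw [MeasureTheory.integral_const_mul, gauss_quad a b c hdu]
  -- Lagrange identity
  have hcross : (crossProduct ou du) ⬝ᵥ (crossProduct ou du) = c * a - b * b := by
    rw [cross_dot_cross]
    rw [← ha_def, ← hb_def, ← hc_def, dotProduct_comm du ou, ← hb_def]
  have hDsq : Dsq = c - b ^ 2 / a := by
    show (crossProduct ou du) ⬝ᵥ (crossProduct ou du) / a = c - b ^ 2 / a
    rw [hcross]
    field_simp
  rw [hDsq]
  ring
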